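/- Let A be an integral domain with quotient field K and let f(x) ∈ A[x] be indecomposable in K[x], of degree d ≥ 2 prime to the characteristic of K (i.e., char K = 0 or char K does not divide d). Then there exists a nonzero element I_f ∈ A such that for every field k and every ring homomorphism σ : A → k with σ(I_f) ≠ 0, the polynomial f^σ(x) ∈ k[x], obtained by applying σ to the coefficients of f, is indecomposable in k̄[x] for k̄ an algebraic closure of k. -/

import Mathlib

open Polynomial

/-- A one-variable polynomial over a field is indecomposable if it is non-constant and
cannot be written as `u ∘ g` with both `u` and `g` of degree at least 2. -/
def IndecomposablePoly {K : Type*} [Field K] (f : K[X]) : Prop :=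
  0 < f.natDegree ∧
    ¬ ∃ u g : K[X], 2 ≤ u.natDegree ∧ 2 ≤ g.natDegree ∧ f = u.comp g

section Aux
open Finset

theorem natDegree_le_pred' {R : Type*} [Semiring R] {p : R[X]} {n : ℕ}
    (h : p.natDegree ≤ n) (h0 : p.coeff n = 0) : p.natDegree ≤ n - 1 := by
  rcases lt_or_eq_of_le h with h' | h'
  · exact Nat.le_pred_of_lt h'
  · have : p.leadingCoeff = 0 := by rw [leadingCoeff, h', h0]
    rw [leadingCoeff_eq_zero] at this
    simp [this]

theorem coeff_comp_C_mul_X {R : Type*} [CommSemiring R] (p : R[X]) (b : R) (k : ℕ) :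
    (p.comp (C b * X)).coeff k = p.coeff k * b ^ k := by
  induction p using Polynomial.induction_on' with
  | add p q hp hq => simp [add_comp, hp, hq, add_mul]
  | monomial n a =>
    rw [← C_mul_X_pow_eq_monomial]
    simp only [mul_comp, C_comp, pow_comp, X_comp, mul_pow, ← mul_assoc, ← C_pow, ← C_mul]
    simp only [coeff_C_mul, coeff_X_pow, coeff_monomial]
    rcases eq_or_ne n k with rfl | hnk
    · simp [mul_assoc]
    · simp [hnk, Ne.symm hnk]

theorem approx_root_unique {D : Type*} [CommRing D] [IsDomain D] {e m : ℕ}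
    (he : 1 ≤ e) (hm : 1 ≤ m) (hmD : (m : D) ≠ 0) {F g g' : D[X]}
    (hg : g.Monic) (hg' : g'.Monic) (hge : g.natDegree = e) (hg'e : g'.natDegree = e)
    (h0 : g.coeff 0 = g'.coeff 0)
    (hF : (F - g ^ m).natDegree ≤ m * e - e) (hF' : (F - g' ^ m).natDegree ≤ m * e - e) :
    g = g' := by
  by_contra hne
  have hsub : g - g' ≠ 0 := sub_ne_zero.mpr hne
  set S : D[X] := ∑ i ∈ range m, g ^ i * g' ^ (m - 1 - i) with hS
  have hterm : ∀ i ∈ range m, (g ^ i * g' ^ (m - 1 - i)).Monic ∧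
      (g ^ i * g' ^ (m - 1 - i)).natDegree = (m - 1) * e := by
    intro i hi
    rw [mem_range] at hi
    have h1 : (g ^ i * g' ^ (m - 1 - i)).Monic := (hg.pow i).mul (hg'.pow _)
    refine ⟨h1, ?_⟩
    rw [natDegree_mul (hg.pow i).ne_zero (hg'.pow _).ne_zero, natDegree_pow, natDegree_pow,
      hge, hg'e, ← add_mul]
    congr 1
    omega
  have hSdeg_le : S.natDegree ≤ (m - 1) * e :=
    natDegree_sum_le_of_forall_le _ _ (fun i hi => (hterm i hi).2.le)
  have hScoeff : S.coeff ((m - 1) * e) = (m : D) := by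
    rw [hS, finset_sum_coeff]
    have : ∀ i ∈ range m, (g ^ i * g' ^ (m - 1 - i)).coeff ((m - 1) * e) = 1 := by
      intro i hi
      have := hterm i hi
      rw [← this.2]
      exact this.1.coeff_natDegree
    rw [Finset.sum_congr rfl this]
    simp
  have hSne : S ≠ 0 := fun h => hmD (by rw [← hScoeff, h, coeff_zero])
  have hSdeg : S.natDegree = (m - 1) * e :=
    le_antisymm hSdeg_le (le_natDegree_of_ne_zero (by rw [hScoeff]; exact hmD))
  have hkey : S * (g - g') = (F - g' ^ m) - (F - g ^ m) := by
    rw [geom_sum₂_mul]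
    ring
  have hdegprod : (S * (g - g')).natDegree ≤ m * e - e := by
    rw [hkey]
    exact le_trans (natDegree_sub_le _ _) (max_le hF' hF)
  rw [natDegree_mul hSne hsub, hSdeg] at hdegprod
  have hme : (m - 1) * e = m * e - e := by
    rw [Nat.sub_one_mul]
  rw [hme] at hdegprod
  have hdc : (g - g').natDegree = 0 := by omega
  have : g - g' = C ((g - g').coeff 0) := eq_C_of_natDegree_le_zero hdc.le
  rw [coeff_sub, h0, sub_self, map_zero] at this
  exact hsub this

noncomputable def adicDiv {R : Type*} [CommRing R] (g F : R[X]) : ℕ → R[X]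
  | 0 => F
  | (i + 1) => adicDiv g F i /ₘ g

noncomputable def adicCoeff {R : Type*} [CommRing R] (g F : R[X]) (i : ℕ) : R[X] :=
  adicDiv g F i %ₘ g

section Adic
variable {R : Type*} [CommRing R] {g : R[X]} (hg : g.Monic) (hge : 1 ≤ g.natDegree)

theorem comp_divByMonic (u : R[X]) (hg : g.Monic) (hge : 1 ≤ g.natDegree) :
    u.comp g /ₘ g = u.divX.comp g ∧ u.comp g %ₘ g = C (u.coeff 0) := by
  apply div_modByMonic_unique _ _ hg
  constructor
  · conv_rhs => rw [← X_mul_divX_add u]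
    rw [add_comp, mul_comp, X_comp, C_comp]
    ring
  · exact lt_of_le_of_lt degree_C_le (natDegree_pos_iff_degree_pos.mp hge)

theorem adicDiv_comp (u : R[X]) (hg : g.Monic) (hge : 1 ≤ g.natDegree) (i : ℕ) :
    adicDiv g (u.comp g) i = (Polynomial.divX^[i] u).comp g := by
  induction i with
  | zero => rfl
  | succ n ih =>
    rw [adicDiv, ih, (comp_divByMonic _ hg hge).1, Function.iterate_succ_apply']

theorem iterate_divX_coeff_zero (u : R[X]) (i : ℕ) :
    (Polynomial.divX^[i] u).coeff 0 = u.coeff i := by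
  induction i generalizing u with
  | zero => rfl
  | succ n ih =>
    rw [Function.iterate_succ_apply, ih, coeff_divX]

theorem adicCoeff_comp (u : R[X]) (hg : g.Monic) (hge : 1 ≤ g.natDegree) (i : ℕ) :
    adicCoeff g (u.comp g) i = C (u.coeff i) := by
  rw [adicCoeff, adicDiv_comp u hg hge, (comp_divByMonic _ hg hge).2,
    iterate_divX_coeff_zero]

theorem adicDiv_map {S : Type*} [CommRing S] (φ : R →+* S) (F : R[X]) (hg : g.Monic) (i : ℕ) :
    (adicDiv g F i).map φ = adicDiv (g.map φ) (F.map φ) i := by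
  induction i with
  | zero => rfl
  | succ n ih => rw [adicDiv, adicDiv, map_divByMonic φ hg, ih]

theorem adicCoeff_map {S : Type*} [CommRing S] (φ : R →+* S) (F : R[X]) (hg : g.Monic) (i : ℕ) :
    (adicCoeff g F i).map φ = adicCoeff (g.map φ) (F.map φ) i := by
  rw [adicCoeff, adicCoeff, map_modByMonic φ hg, adicDiv_map φ F hg i]

theorem adicDiv_natDegree (F : R[X]) (hg : g.Monic) (i : ℕ) :
    (adicDiv g F i).natDegree ≤ F.natDegree - i * g.natDegree := by
  induction i with
  | zero => simp [adicDiv]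
  | succ n ih =>
    rw [adicDiv, natDegree_divByMonic _ hg, Nat.succ_mul]
    omega

theorem adic_reconstruct (F : R[X]) (hg : g.Monic) (n : ℕ) :
    F = (∑ i ∈ range n, adicCoeff g F i * g ^ i) + adicDiv g F n * g ^ n := by
  induction n with
  | zero => simp [adicDiv]
  | succ n ih =>
    rw [Finset.sum_range_succ]
    conv_lhs => rw [ih]
    have : adicDiv g F n = adicCoeff g F n + g * adicDiv g F (n + 1) := by
      rw [adicCoeff, adicDiv, modByMonic_add_div _ g]
    rw [this]
    ring

end Adic
theorem approx_root_step {R : Type*} [CommRing R] [Nontrivial R] {F g : R[X]} {d e m' N : ℕ}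
    (hF : F.Monic) (hFd : F.natDegree = d) (hd : d = (m' + 1) * e)
    (he : 1 ≤ e) (hm : 1 ≤ m') (hmR : IsUnit ((m' + 1 : ℕ) : R))
    (hg : g.Monic) (hge : g.natDegree = e) (hg0 : g.coeff 0 = 0)
    (hNlow : d - e < N) (hNhigh : N ≤ d - 1)
    (hbound : (F - g ^ (m' + 1)).natDegree ≤ N) :
    ∃ g' : R[X], g'.Monic ∧ g'.natDegree = e ∧ g'.coeff 0 = 0 ∧
      (F - g' ^ (m' + 1)).natDegree ≤ N - 1 := by
  have hde : e ≤ d := by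
    rw [hd]; exact Nat.le_mul_of_pos_left e (by omega)
  have hdme : d - e = m' * e := by
    rw [hd]; rw [Nat.add_mul, one_mul]; omega
  set k : ℕ := N - (d - e) with hk
  have hk1 : 1 ≤ k := by omega
  have hNk : N = m' * e + k := by omega
  have hke : k ≤ e - 1 := by omega
  have hkelt : k < e := by omega
  have hN1 : 1 ≤ N := by omega
  set t : R := (F - g ^ (m' + 1)).coeff N with ht
  set w : R := ↑hmR.unit⁻¹ with hwdef
  have hw : ((m' + 1 : ℕ) : R) * w = 1 := hmR.mul_val_inv
  set h : R[X] := C (t * w) * X ^ k with hhdef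
  have hhdeg : h.natDegree ≤ k := (natDegree_C_mul_le _ _).trans (natDegree_X_pow k).le
  have hdegh : h.degree < g.degree := by
    rw [degree_eq_natDegree hg.ne_zero, hge]
    exact lt_of_le_of_lt (degree_le_natDegree.trans (Nat.cast_le.mpr hhdeg))
      (Nat.cast_lt.mpr hkelt)
  refine ⟨g + h, hg.add_of_left hdegh, ?_, ?_, ?_⟩
  · rw [natDegree_eq_of_degree_eq (degree_add_eq_left_of_degree_lt hdegh), hge]
  · rw [coeff_add, hg0, hhdef, coeff_C_mul, coeff_X_pow, if_neg (by omega), mul_zero, add_zero]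
  · set E1 : R[X] := F - g ^ (m' + 1) with hE1
    set E2 : R[X] := g ^ m' * h * ((m' + 1 : ℕ) : R[X]) with hE2
    set E3 : R[X] := ∑ j ∈ range m', g ^ j * h ^ (m' + 1 - j) * ((m' + 1).choose j : R[X])
      with hE3
    have hss : m' + 1 - m' = 1 := by omega
    have hsplit : F - (g + h) ^ (m' + 1) = E1 - E2 - E3 := by
      rw [add_pow, Finset.sum_range_succ, Finset.sum_range_succ]
      simp only [Nat.sub_self, pow_zero, Nat.choose_self, Nat.cast_one, mul_one,
        hss, pow_one, Nat.choose_succ_self_right]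
      rw [hE1, hE2, hE3]
      ring
    rw [hsplit]
    -- degree bounds
    have hdE1 : E1.natDegree ≤ N := hbound
    have hdegg : ∀ j : ℕ, (g ^ j).natDegree = j * e := by
      intro j; rw [hg.natDegree_pow, hge]
    have hdE2 : E2.natDegree ≤ N := by
      refine (natDegree_mul_le).trans ?_
      have h1 : (g ^ m' * h).natDegree ≤ m' * e + k :=
        (natDegree_mul_le).trans (by rw [hdegg]; omega)
      have h2 : (((m' + 1 : ℕ) : R[X])).natDegree = 0 := natDegree_natCast _
      omega
    have hdE3term : ∀ j ∈ range m',
        (g ^ j * h ^ (m' + 1 - j) * ((m' + 1).choose j : R[X])).natDegree ≤ N - 1 := by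
      intro j hj
      rw [mem_range] at hj
      refine (natDegree_mul_le).trans ?_
      rw [natDegree_natCast, add_zero]
      refine (natDegree_mul_le).trans ?_
      have h1 : (h ^ (m' + 1 - j)).natDegree ≤ (m' + 1 - j) * k :=
        natDegree_pow_le.trans (Nat.mul_le_mul_left _ hhdeg)
      have h2 : (m' - j) * (k + 1) ≤ (m' - j) * e := Nat.mul_le_mul_left _ (by omega)
      have h3 : (m' + 1 - j) * k = (m' - j) * k + k := by
        have : m' + 1 - j = (m' - j) + 1 := by omega
        rw [this, Nat.add_mul, one_mul]
      have h4 : j * e + (m' - j) * e = m' * e := by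
        rw [← Nat.add_mul]; congr 1; omega
      have h5 : 1 ≤ m' - j := by omega
      rw [mul_add, mul_one] at h2
      rw [hdegg]
      omega
    have hdE3 : E3.natDegree ≤ N - 1 :=
      natDegree_sum_le_of_forall_le _ _ hdE3term
    have hNdeg : (E1 - E2 - E3).natDegree ≤ N :=
      (natDegree_sub_le _ _).trans (max_le ((natDegree_sub_le _ _).trans
        (max_le hdE1 hdE2)) (hdE3.trans (by omega)))
    refine natDegree_le_pred' hNdeg ?_
    -- coefficient computation at N
    have hcE3 : E3.coeff N = 0 := by
      rw [hE3, finset_sum_coeff]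
      refine Finset.sum_eq_zero fun j hj => ?_
      exact coeff_eq_zero_of_natDegree_lt (lt_of_le_of_lt (hdE3term j hj) (by omega))
    have hcE2 : E2.coeff N = t := by
      have hrw : E2 = C (t * w) * (g ^ m' * X ^ k) * C ((m' + 1 : ℕ) : R) := by
        rw [hE2, hhdef, C_eq_natCast]
        ring
      rw [hrw, coeff_mul_C, coeff_C_mul, coeff_mul_X_pow', if_pos (by omega)]
      have hNk' : N - k = m' * e := by omega
      have : (g ^ m').coeff (N - k) = 1 := by
        rw [hNk', ← hdegg m']
        exact (hg.pow m').coeff_natDegree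
      rw [this, mul_one]
      calc t * w * ((m' + 1 : ℕ) : R) = t * (((m' + 1 : ℕ) : R) * w) := by ring
        _ = t := by rw [hw, mul_one]
    rw [coeff_sub, coeff_sub, hcE2, hcE3, ← ht]
    ring

theorem approx_root_exists {R : Type*} [CommRing R] [Nontrivial R] {F : R[X]} {d e m : ℕ}
    (hF : F.Monic) (hFd : F.natDegree = d) (hd : d = m * e)
    (he : 1 ≤ e) (hm : 2 ≤ m) (hmR : IsUnit ((m : ℕ) : R)) :
    ∃ g : R[X], g.Monic ∧ g.natDegree = e ∧ g.coeff 0 = 0 ∧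
      (F - g ^ m).natDegree ≤ d - e := by
  obtain ⟨m', rfl⟩ : ∃ m', m = m' + 1 := ⟨m - 1, by omega⟩
  have hm' : 1 ≤ m' := by omega
  have hde : e ≤ d := by rw [hd]; exact Nat.le_mul_of_pos_left e (by omega)
  have hd1 : 1 ≤ d := by omega
  have key : ∀ i : ℕ, ∃ g : R[X], g.Monic ∧ g.natDegree = e ∧ g.coeff 0 = 0 ∧
      (F - g ^ (m' + 1)).natDegree ≤ max (d - e) (d - 1 - i) := by
    intro i
    induction i with
    | zero =>
      refine ⟨X ^ e, monic_X_pow e, natDegree_X_pow e,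
        by rw [coeff_X_pow, if_neg (by omega)], ?_⟩
      have hXd : (X ^ e : R[X]) ^ (m' + 1) = X ^ d := by
        rw [← pow_mul]
        congr 1
        rw [hd]; ring
      rw [hXd]
      have h1 : (F - X ^ d : R[X]).natDegree ≤ d :=
        (natDegree_sub_le _ _).trans (by simp [hFd])
      have h2 : (F - X ^ d : R[X]).coeff d = 0 := by
        rw [coeff_sub, coeff_X_pow, if_pos rfl, ← hFd, hF.coeff_natDegree, sub_self]
      exact (natDegree_le_pred' h1 h2).trans (by omega)
    | succ i ih =>
      obtain ⟨g, hg, hge, hg0, hb⟩ := ih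
      by_cases hcase : d - 1 - i ≤ d - e
      · exact ⟨g, hg, hge, hg0, hb.trans (by omega)⟩
      · obtain ⟨g', h1, h2, h3, h4⟩ := approx_root_step hF hFd hd he hm' hmR hg hge hg0
          (show d - e < d - 1 - i by omega) (show d - 1 - i ≤ d - 1 by omega)
          (hb.trans (by omega))
        exact ⟨g', h1, h2, h3, h4.trans (by omega)⟩
  obtain ⟨g, h1, h2, h3, h4⟩ := key (e - 1)
  exact ⟨g, h1, h2, h3, h4.trans (by omega)⟩
theorem decomp_of_adicCoeff_const {R : Type*} [CommRing R] [Nontrivial R] {F g : R[X]}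
    {d e m : ℕ}
    (hF : F.Monic) (hFd : F.natDegree = d) (hd : d = m * e) (he : 1 ≤ e) (hm1 : 1 ≤ m)
    (hg : g.Monic) (hge : g.natDegree = e)
    (hconst : ∀ i j, 1 ≤ j → (adicCoeff g F i).coeff j = 0) :
    ∃ u : R[X], u.natDegree ≤ m ∧ u.coeff m ≠ 0 ∧ F = u.comp g := by
  have hcoef : ∀ i, adicCoeff g F i = C ((adicCoeff g F i).coeff 0) := by
    intro i
    ext j
    rcases Nat.eq_zero_or_pos j with rfl | hj
    · simp
    · rw [hconst i j hj, coeff_C, if_neg (by omega)]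
  have hdm0 : (adicDiv g F m).natDegree ≤ 0 := by
    have := adicDiv_natDegree F hg m
    rw [hFd, hge, hd] at this
    omega
  have hdivm : adicDiv g F m = C ((adicDiv g F m).coeff 0) := eq_C_of_natDegree_le_zero hdm0
  set γ : R := (adicDiv g F m).coeff 0 with hγ
  set u : R[X] := (∑ i ∈ range m, C ((adicCoeff g F i).coeff 0) * X ^ i) + C γ * X ^ m with hu
  have hrec := adic_reconstruct F hg m
  have hcomp : F = u.comp g := by
    rw [hu, add_comp, mul_comp, C_comp, pow_comp, X_comp]
    have : (∑ i ∈ range m, C ((adicCoeff g F i).coeff 0) * X ^ i).comp g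
        = ∑ i ∈ range m, C ((adicCoeff g F i).coeff 0) * g ^ i := by
      rw [← coe_compRingHom_apply, map_sum]
      refine Finset.sum_congr rfl fun i _ => ?_
      rw [coe_compRingHom_apply, mul_comp, C_comp, pow_comp, X_comp]
    rw [this]
    conv_lhs => rw [hrec]
    congr 1
    · exact Finset.sum_congr rfl fun i _ => by rw [← hcoef]
    · rw [hdivm]
  have hγne : γ ≠ 0 := by
    intro h0
    have hFdeg : F.natDegree ≤ (m - 1) * e := by
      conv_lhs => rw [hrec, hdivm, h0, map_zero, zero_mul, add_zero]
      refine natDegree_sum_le_of_forall_le _ _ fun i hi => ?_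
      rw [mem_range] at hi
      refine natDegree_mul_le.trans ?_
      have h1 : (adicCoeff g F i).natDegree ≤ 0 := by rw [hcoef i]; exact (natDegree_C _).le
      have h2 : (g ^ i).natDegree = i * e := by rw [hg.natDegree_pow, hge]
      have h3 : i * e ≤ (m - 1) * e := Nat.mul_le_mul_right _ (by omega)
      omega
    have hlt : (m - 1) * e < d := by
      have h4 : (m - 1) * e = m * e - e := Nat.sub_one_mul m e
      have h5 : e ≤ m * e := Nat.le_mul_of_pos_left e (by omega)
      omega
    omega
  refine ⟨u, ?_, ?_, hcomp⟩
  · refine natDegree_add_le_of_degree_le (natDegree_sum_le_of_forall_le _ _ fun i hi => ?_)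
      ((natDegree_C_mul_le _ _).trans (natDegree_X_pow m).le)
    rw [mem_range] at hi
    exact (natDegree_C_mul_le _ _).trans ((natDegree_X_pow i).le.trans (by omega))
  · rw [hu, coeff_add, finset_sum_coeff]
    have : ∀ i ∈ range m, (C ((adicCoeff g F i).coeff 0) * X ^ i).coeff m = 0 := by
      intro i hi
      rw [mem_range] at hi
      rw [coeff_C_mul, coeff_X_pow, if_neg (by omega), mul_zero]
    rw [Finset.sum_congr rfl this, Finset.sum_const_zero, zero_add, coeff_C_mul, coeff_X_pow,
      if_pos rfl, mul_one]
    exact hγne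

theorem decomp_scale {K : Type*} [Field K] {b c : K} (hb : b ≠ 0) (hc : c ≠ 0) {p : K[X]}
    (h : ∃ u g : K[X], 2 ≤ u.natDegree ∧ 2 ≤ g.natDegree ∧ p = u.comp g) :
    ∃ u g : K[X], 2 ≤ u.natDegree ∧ 2 ≤ g.natDegree ∧ C c * p.comp (C b * X) = u.comp g := by
  obtain ⟨u, g, hu, hg, rfl⟩ := h
  refine ⟨C c * u, g.comp (C b * X), ?_, ?_, ?_⟩
  · rwa [natDegree_C_mul hc]
  · rwa [natDegree_comp, natDegree_C_mul_X _ hb, mul_one]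
  · rw [comp_assoc, mul_comp, C_comp]

theorem scale_inv {K : Type*} [Field K] {b c : K} (hb : b ≠ 0) (hc : c ≠ 0) (p : K[X]) :
    C c⁻¹ * (C c * p.comp (C b * X)).comp (C b⁻¹ * X) = p := by
  rw [mul_comp, C_comp, comp_assoc, mul_comp, C_comp, X_comp, ← mul_assoc (C b), ← C_mul,
    mul_inv_cancel₀ hb, C_1, one_mul, comp_X, ← mul_assoc, ← C_mul, inv_mul_cancel₀ hc, C_1,
    one_mul]

theorem normalize_decomp {L : Type*} [Field L] {F u g : L[X]} (hg1 : 1 ≤ g.natDegree)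
    (h : F = u.comp g) :
    ∃ u' g' : L[X], g'.Monic ∧ g'.coeff 0 = 0 ∧ g'.natDegree = g.natDegree ∧
      u'.natDegree = u.natDegree ∧ F = u'.comp g' := by
  have hgne : g ≠ 0 := fun h0 => by simp [h0] at hg1
  set b : L := g.leadingCoeff with hb
  have hbne : b ≠ 0 := leadingCoeff_ne_zero.mpr hgne
  set c : L := g.coeff 0 with hc
  set g' : L[X] := C b⁻¹ * (g - C c) with hg'
  have hg'coeff : ∀ n, g'.coeff n = b⁻¹ * (g.coeff n - (C c).coeff n) := by
    intro n; rw [hg', coeff_C_mul, coeff_sub]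
  have hg'top : g'.coeff g.natDegree = 1 := by
    rw [hg'coeff, coeff_C, if_neg (by omega), sub_zero, ← leadingCoeff, ← hb,
      inv_mul_cancel₀ hbne]
  have hg'le : g'.natDegree ≤ g.natDegree := by
    refine (natDegree_C_mul_le _ _).trans ((natDegree_sub_le _ _).trans ?_)
    simp [natDegree_C]
  have hg'mon : g'.Monic := monic_of_natDegree_le_of_coeff_eq_one _ hg'le hg'top
  have hg'deg : g'.natDegree = g.natDegree :=
    le_antisymm hg'le (le_natDegree_of_ne_zero (by rw [hg'top]; exact one_ne_zero))
  have hg'0 : g'.coeff 0 = 0 := by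
    rw [hg'coeff, coeff_C, if_pos rfl, ← hc, sub_self, mul_zero]
  have hlin : C b * g' + C c = g := by
    rw [hg', ← mul_assoc, ← C_mul, mul_inv_cancel₀ hbne, C_1, one_mul, sub_add_cancel]
  refine ⟨u.comp (C b * X + C c), g', hg'mon, hg'0, hg'deg, ?_, ?_⟩
  · rw [natDegree_comp, natDegree_linear hbne, mul_one]
  · rw [h, comp_assoc, add_comp, mul_comp, C_comp, X_comp, C_comp, hlin]

theorem mapF_formula {R L : Type*} [CommRing R] [CommRing L] (φ : R →+* L)
    (c av : R) (n : ℕ) (p : R[X]) :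
    (C (c ^ n) * (p.comp (C av * X))).map φ
      = C (φ c ^ n) * ((p.map φ).comp (C (φ av) * X)) := by
  rw [Polynomial.map_mul, map_C, map_pow, Polynomial.map_comp, Polynomial.map_mul, map_C, map_X]

end Aux

open Finset in
/-- **Proposition (Bertini–Noether for indecomposability).** Let `A` be an integral domain with
quotient field `K`, and let `f ∈ A[x]` be indecomposable in `K[x]` of degree `d ≥ 2` prime to
the characteristic of `K`. Then there is a nonzero `I_f ∈ A` such that for every field `k` and
ring morphism `σ : A → k` with `σ(I_f) ≠ 0`, the polynomial `f^σ` is indecomposable in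
`k̄[x]`. -/
theorem bertini_noether_indecomposable (A : Type*) [CommRing A] [IsDomain A]
    (f : Polynomial A) (d : ℕ) (hdeg : f.natDegree = d) (hd : 2 ≤ d)
    (hchar : ringChar (FractionRing A) = 0 ∨ ¬ (ringChar (FractionRing A) ∣ d))
    (hf : IndecomposablePoly (f.map (algebraMap A (FractionRing A)))) :
    ∃ I : A, I ≠ 0 ∧
      ∀ (k : Type u) [Field k] (σ : A →+* k), σ I ≠ 0 →
        IndecomposablePoly (f.map ((algebraMap k (AlgebraicClosure k)).comp σ)) := by
  classical
  have hdK : ((d : ℕ) : FractionRing A) ≠ 0 := by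
    intro h0
    have hdvd : ringChar (FractionRing A) ∣ d :=
      ringChar.dvd h0
    rcases hchar with h | h
    · rw [h] at hdvd
      omega
    · exact h hdvd
  have hfne : f ≠ 0 := by
    intro h0
    rw [h0, natDegree_zero] at hdeg
    omega
  have hinjK : Function.Injective (algebraMap A (FractionRing A)) :=
    IsFractionRing.injective A (FractionRing A)
  have hdA : (d : A) ≠ 0 := by
    intro h0
    apply hdK
    rw [← map_natCast (algebraMap A (FractionRing A)) d, h0, map_zero]
  set a : A := f.leadingCoeff with ha
  have hlc : a ≠ 0 := leadingCoeff_ne_zero.mpr hfne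
  set s : A := a * (d : A) with hs
  have hsne : s ≠ 0 := mul_ne_zero hlc hdA
  have hle : Submonoid.powers s ≤ nonZeroDivisors A :=
    powers_le_nonZeroDivisors_of_noZeroDivisors hsne
  haveI : IsDomain (Localization.Away s) := IsLocalization.isDomain_localization hle
  -- units in the localization
  have hsu : IsUnit (algebraMap A (Localization.Away s) s) :=
    IsLocalization.Away.algebraMap_isUnit s
  have hsplit : algebraMap A (Localization.Away s) s
      = algebraMap A (Localization.Away s) a * ((d : ℕ) : Localization.Away s) := by
    rw [hs, map_mul, map_natCast]
  have hau : IsUnit (algebraMap A (Localization.Away s) a) :=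
    isUnit_of_mul_isUnit_left (hsplit ▸ hsu)
  have hdu : IsUnit ((d : ℕ) : Localization.Away s) :=
    isUnit_of_mul_isUnit_right (hsplit ▸ hsu)
  obtain ⟨av, hav⟩ := hau.exists_right_inv
  set aR : Localization.Away s := algebraMap A (Localization.Away s) a with haR
  -- the monicized polynomial F
  set fR : (Localization.Away s)[X] := f.map (algebraMap A (Localization.Away s)) with hfR
  have hfRd : fR.coeff d = aR := by
    rw [hfR, coeff_map, haR]
    congr 1
    rw [ha, leadingCoeff, hdeg]
  set F : (Localization.Away s)[X] := C (aR ^ (d - 1)) * (fR.comp (C av * X)) with hF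
  have hFcoeff : ∀ n, F.coeff n = aR ^ (d - 1) * (fR.coeff n * av ^ n) := by
    intro n
    rw [hF, coeff_C_mul, coeff_comp_C_mul_X]
  have hFd1 : F.coeff d = 1 := by
    rw [hFcoeff, hfRd]
    have hd' : d - 1 + 1 = d := by omega
    calc aR ^ (d - 1) * (aR * av ^ d) = aR ^ (d - 1 + 1) * av ^ d := by rw [pow_succ]; ring
      _ = (aR * av) ^ d := by rw [hd', mul_pow]
      _ = 1 := by rw [hav, one_pow]
  have hFdegle : F.natDegree ≤ d := by
    refine (natDegree_C_mul_le _ _).trans (natDegree_comp_le.trans ?_)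
    have h1 : (C av * X : (Localization.Away s)[X]).natDegree ≤ 1 :=
      (natDegree_C_mul_le _ _).trans natDegree_X_le
    have h2 : fR.natDegree ≤ d := hdeg ▸ natDegree_map_le
    calc fR.natDegree * (C av * X : (Localization.Away s)[X]).natDegree ≤ d * 1 :=
          Nat.mul_le_mul h2 h1
      _ = d := mul_one d
  have hFmon : F.Monic := monic_of_natDegree_le_of_coeff_eq_one d hFdegle hFd1
  have hFdeg : F.natDegree = d :=
    le_antisymm hFdegle (le_natDegree_of_ne_zero (by rw [hFd1]; exact one_ne_zero))
  -- the finite set of inner degrees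
  set E : Finset ℕ := (Nat.divisors d).filter (fun e => 2 ≤ e ∧ 2 ≤ d / e) with hE
  have hmemE : ∀ e ∈ E, e ∣ d ∧ 2 ≤ e ∧ 2 ≤ d / e := by
    intro e he
    rw [hE, Finset.mem_filter, Nat.mem_divisors] at he
    exact ⟨he.1.1, he.2.1, he.2.2⟩
  have hGex : ∀ e ∈ E, ∃ g : (Localization.Away s)[X], g.Monic ∧ g.natDegree = e ∧
      g.coeff 0 = 0 ∧ (F - g ^ (d / e)).natDegree ≤ d - e := by
    intro e he
    obtain ⟨hdvd, he2, hm2⟩ := hmemE e he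
    have hdeq : d = (d / e) * e := (Nat.div_mul_cancel hdvd).symm
    have hmu : IsUnit ((d / e : ℕ) : Localization.Away s) := by
      apply isUnit_of_mul_isUnit_left (y := ((e : ℕ) : Localization.Away s))
      rw [← Nat.cast_mul, ← hdeq]
      exact hdu
    exact approx_root_exists hFmon hFdeg hdeq (by omega) hm2 hmu
  choose G hG1 hG2 hG3 hG4 using hGex
  -- the map ψ to the fraction field
  have hsuK : IsUnit (algebraMap A (FractionRing A) s) := by
    refine isUnit_iff_ne_zero.mpr fun h0 => hsne (hinjK ?_)
    rw [h0, map_zero]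
  set ψ : Localization.Away s →+* FractionRing A := IsLocalization.Away.lift s hsuK with hψ
  have hψa : ∀ x : A, ψ (algebraMap A (Localization.Away s) x)
      = algebraMap A (FractionRing A) x := fun x => IsLocalization.Away.lift_eq s hsuK x
  have hψinj : Function.Injective ψ := by
    suffices hker : ∀ z : Localization.Away s, ψ z = 0 → z = 0 by
      intro x y hxy
      have := hker (x - y) (by rw [map_sub, hxy, sub_self])
      exact sub_eq_zero.mp this
    intro z hz
    obtain ⟨⟨r, sp⟩, hsp⟩ := IsLocalization.surj (M := Submonoid.powers s) z
    have hr0 : r = 0 := by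
      apply hinjK
      rw [map_zero, ← hψa r, ← hsp, map_mul, hz, zero_mul]
    rw [hr0, map_zero] at hsp
    have hunit : IsUnit (algebraMap A (Localization.Away s) (sp : A)) :=
      IsLocalization.map_units (Localization.Away s) sp
    obtain ⟨sv, hsv⟩ := hunit.exists_right_inv
    calc z = z * (algebraMap A (Localization.Away s) (sp : A) * sv) := by rw [hsv, mul_one]
      _ = 0 := by rw [← mul_assoc, hsp, zero_mul]
  -- obstruction elements
  have hobs : ∀ e (he : e ∈ E), ∃ (aa : A) (i j n : ℕ), aa ≠ 0 ∧ 1 ≤ j ∧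
      (adicCoeff (G e he) F i).coeff j * (algebraMap A (Localization.Away s) s) ^ n
        = algebraMap A (Localization.Away s) aa := by
    intro e he
    obtain ⟨hdvd, he2, hm2⟩ := hmemE e he
    have hdeq : d = (d / e) * e := (Nat.div_mul_cancel hdvd).symm
    have hex : ∃ i j, 1 ≤ j ∧ (adicCoeff (G e he) F i).coeff j ≠ 0 := by
      by_contra hall
      push_neg at hall
      obtain ⟨u, hud, hum, hcomp⟩ := decomp_of_adicCoeff_const hFmon hFdeg hdeq (by omega)
        (by omega) (hG1 e he) (hG2 e he) (fun i j hj => hall i j hj)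
      apply hf.2
      have hFψ : F.map ψ = C (ψ aR ^ (d - 1)) *
          ((f.map (algebraMap A (FractionRing A))).comp (C (ψ av) * X)) := by
        rw [hF, mapF_formula, hfR, Polynomial.map_map,
          show ψ.comp (algebraMap A (Localization.Away s)) = algebraMap A (FractionRing A)
            from RingHom.ext hψa]
      have hinv : ψ aR * ψ av = 1 := by rw [← map_mul, hav, map_one]
      have hcψ1 : ψ aR ≠ 0 := fun h0 => by rw [h0, zero_mul] at hinv; exact zero_ne_one hinv
      have hcψ2 : ψ av ≠ 0 := fun h0 => by rw [h0, mul_zero] at hinv; exact zero_ne_one hinv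
      have hdec : ∃ u1 g1 : (FractionRing A)[X], 2 ≤ u1.natDegree ∧ 2 ≤ g1.natDegree ∧
          F.map ψ = u1.comp g1 := by
        refine ⟨u.map ψ, (G e he).map ψ, ?_, ?_, ?_⟩
        · refine le_trans (by omega : 2 ≤ d / e) (le_natDegree_of_ne_zero ?_)
          rw [coeff_map]
          intro h0
          exact hum (hψinj (by rw [h0, map_zero]))
        · rw [(hG1 e he).natDegree_map ψ, hG2 e he]
          exact he2
        · rw [hcomp, Polynomial.map_comp]
      obtain ⟨u2, g2, hu2, hg2, heq2⟩ :=
        decomp_scale (inv_ne_zero hcψ2) (inv_ne_zero (pow_ne_zero (d - 1) hcψ1)) hdec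
      refine ⟨u2, g2, hu2, hg2, ?_⟩
      have hKeq := scale_inv hcψ2 (pow_ne_zero (d - 1) hcψ1)
        (f.map (algebraMap A (FractionRing A)))
      rw [← hKeq, ← hFψ, heq2]
    obtain ⟨i, j, hj, hne⟩ := hex
    obtain ⟨⟨aa, sp⟩, hsp⟩ := IsLocalization.surj (M := Submonoid.powers s)
      ((adicCoeff (G e he) F i).coeff j)
    obtain ⟨n, hn⟩ := sp.2
    have haa : aa ≠ 0 := by
      intro h0
      rw [h0, map_zero] at hsp
      have hunit : IsUnit (algebraMap A (Localization.Away s) (sp : A)) :=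
        IsLocalization.map_units (Localization.Away s) sp
      obtain ⟨sv, hsv⟩ := hunit.exists_right_inv
      apply hne
      calc (adicCoeff (G e he) F i).coeff j
          = (adicCoeff (G e he) F i).coeff j *
            (algebraMap A (Localization.Away s) (sp : A) * sv) := by rw [hsv, mul_one]
        _ = 0 := by rw [← mul_assoc, hsp, zero_mul]
    refine ⟨aa, i, j, n, haa, hj, ?_⟩
    have hn' : s ^ n = (sp : A) := hn
    rw [← map_pow, hn']
    exact hsp
  choose num ii jj nn hnum0 hjj hrel using hobs
  refine ⟨s * ∏ e ∈ E.attach, num e.1 e.2, ?_, ?_⟩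
  · refine mul_ne_zero hsne ?_
    rw [Finset.prod_ne_zero_iff]
    exact fun e _ => hnum0 e.1 e.2
  · intro k _ σ hσI
    set τ : A →+* AlgebraicClosure k := (algebraMap k (AlgebraicClosure k)).comp σ with hτ
    have hkinj : Function.Injective (algebraMap k (AlgebraicClosure k)) :=
      (algebraMap k (AlgebraicClosure k)).injective
    have hτI : τ (s * ∏ e ∈ E.attach, num e.1 e.2) ≠ 0 := by
      intro h0
      apply hσI
      apply hkinj
      rw [map_zero]
      exact h0
    have hτs : τ s ≠ 0 := fun h0 => hτI (by rw [map_mul, h0, zero_mul])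
    have hτnum : ∀ e (he : e ∈ E), τ (num e he) ≠ 0 := by
      intro e he h0
      apply hτI
      rw [map_mul, map_prod]
      apply mul_eq_zero_of_right
      exact Finset.prod_eq_zero (Finset.mem_attach E ⟨e, he⟩) h0
    have hsu2 : IsUnit (τ s) := isUnit_iff_ne_zero.mpr hτs
    set σb : Localization.Away s →+* AlgebraicClosure k :=
      IsLocalization.Away.lift s hsu2 with hσb
    have hσba : ∀ x : A, σb (algebraMap A (Localization.Away s) x) = τ x :=
      fun x => IsLocalization.Away.lift_eq s hsu2 x
    have hτsplit : τ s = τ a * ((d : ℕ) : AlgebraicClosure k) := by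
      rw [hs, map_mul, map_natCast]
    have hτa : τ a ≠ 0 := fun h0 => hτs (by rw [hτsplit, h0, zero_mul])
    have hτd : ((d : ℕ) : AlgebraicClosure k) ≠ 0 :=
      fun h0 => hτs (by rw [hτsplit, h0, mul_zero])
    have hfτcoeff : (f.map τ).coeff d = τ a := by
      rw [coeff_map]
      congr 1
      rw [ha, leadingCoeff, hdeg]
    constructor
    · have hle' : d ≤ (f.map τ).natDegree :=
        le_natDegree_of_ne_zero (by rw [hfτcoeff]; exact hτa)
      omega
    · rintro ⟨u0, g0, hu0, hg0, hcomp0⟩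
      have hFσmon : (F.map σb).Monic := hFmon.map σb
      have hFσd : (F.map σb).natDegree = d := by rw [hFmon.natDegree_map, hFdeg]
      have hinv : σb aR * σb av = 1 := by rw [← map_mul, hav, map_one]
      have hbσ1 : σb aR ≠ 0 := fun h0 => by rw [h0, zero_mul] at hinv; exact zero_ne_one hinv
      have hbσ2 : σb av ≠ 0 := fun h0 => by rw [h0, mul_zero] at hinv; exact zero_ne_one hinv
      have hFσeq : F.map σb = C (σb aR ^ (d - 1)) * ((f.map τ).comp (C (σb av) * X)) := by
        rw [hF, mapF_formula, hfR, Polynomial.map_map,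
          show σb.comp (algebraMap A (Localization.Away s)) = τ from RingHom.ext hσba]
      obtain ⟨u1, g1, hu1, hg1, heq1⟩ :=
        decomp_scale hbσ2 (pow_ne_zero (d - 1) hbσ1) ⟨u0, g0, hu0, hg0, hcomp0⟩
      rw [← hFσeq] at heq1
      obtain ⟨u2, g2, hg2mon, hg20, hg2d, hu2d, heq2⟩ := normalize_decomp (by omega) heq1
      have hd_me : u1.natDegree * g1.natDegree = d := by
        rw [← hFσd, heq2, natDegree_comp, hu2d, hg2d]
      have hdiv : d / g1.natDegree = u1.natDegree := by
        rw [← hd_me]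
        exact Nat.mul_div_cancel u1.natDegree (by omega)
      have he1E : g1.natDegree ∈ E := by
        rw [hE, Finset.mem_filter, Nat.mem_divisors]
        exact ⟨⟨Dvd.intro u1.natDegree (by rw [mul_comm]; exact hd_me), by omega⟩, hg1, by omega⟩
      have hGeσmon : ((G g1.natDegree he1E).map σb).Monic := (hG1 _ _).map σb
      have hGeσd : ((G g1.natDegree he1E).map σb).natDegree = g1.natDegree := by
        rw [(hG1 _ _).natDegree_map, hG2]
      have hm1kb : ((u1.natDegree : ℕ) : AlgebraicClosure k) ≠ 0 := by
        intro h0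
        apply hτd
        rw [← hd_me, Nat.cast_mul, h0, zero_mul]
      -- u2 has leading coefficient 1 at degree m1
      have hu2top : u2.coeff u1.natDegree = 1 := by
        have hlead : u2.leadingCoeff * g2.leadingCoeff ^ u2.natDegree = 1 := by
          rw [← leadingCoeff_comp (by omega : g2.natDegree ≠ 0), ← heq2]
          exact hFσmon
        rw [hg2mon.leadingCoeff, one_pow, mul_one] at hlead
        rw [← hu2d, ← leadingCoeff]
        exact hlead
      have hbound1 : ((F.map σb) - g2 ^ u1.natDegree).natDegree
          ≤ u1.natDegree * g1.natDegree - g1.natDegree := by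
        have hrw : (F.map σb) - g2 ^ u1.natDegree = (u2 - X ^ u1.natDegree).comp g2 := by
          rw [sub_comp, pow_comp, X_comp, ← heq2]
        have hmid : (u2 - X ^ u1.natDegree).natDegree ≤ u1.natDegree - 1 := by
          refine natDegree_le_pred' ((natDegree_sub_le _ _).trans ?_) ?_
          · simp [hu2d]
          · rw [coeff_sub, coeff_X_pow, if_pos rfl, hu2top, sub_self]
        rw [hrw, natDegree_comp, hg2d]
        calc (u2 - X ^ u1.natDegree).natDegree * g1.natDegree
            ≤ (u1.natDegree - 1) * g1.natDegree := Nat.mul_le_mul_right _ hmid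
          _ = u1.natDegree * g1.natDegree - g1.natDegree := Nat.sub_one_mul _ _
      have hbound2 : ((F.map σb) - ((G g1.natDegree he1E).map σb) ^ u1.natDegree).natDegree
          ≤ u1.natDegree * g1.natDegree - g1.natDegree := by
        have hrw : (F.map σb) - ((G g1.natDegree he1E).map σb) ^ u1.natDegree
            = (F - (G g1.natDegree he1E) ^ (d / g1.natDegree)).map σb := by
          rw [Polynomial.map_sub, Polynomial.map_pow, hdiv]
        rw [hrw]
        refine natDegree_map_le.trans ((hG4 _ _).trans ?_)
        have : u1.natDegree * g1.natDegree = d := hd_me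
        omega
      have huniq : g2 = (G g1.natDegree he1E).map σb :=
        approx_root_unique (by omega) (by omega) hm1kb hg2mon hGeσmon
          (by rw [hg2d]) hGeσd
          (by rw [hg20, coeff_map, hG3, map_zero]) hbound1 hbound2
      -- adic coefficients are constants
      have hC : adicCoeff ((G g1.natDegree he1E).map σb) (F.map σb) (ii g1.natDegree he1E)
          = C (u2.coeff (ii g1.natDegree he1E)) := by
        rw [← huniq, heq2]
        exact adicCoeff_comp u2 hg2mon (by omega) _
      have hCmap : (adicCoeff (G g1.natDegree he1E) F (ii g1.natDegree he1E)).map σb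
          = adicCoeff ((G g1.natDegree he1E).map σb) (F.map σb) (ii g1.natDegree he1E) :=
        adicCoeff_map σb F (hG1 _ _) _
      have hzero : σb ((adicCoeff (G g1.natDegree he1E) F (ii g1.natDegree he1E)).coeff
          (jj g1.natDegree he1E)) = 0 := by
        have hcc := congrArg (fun p => p.coeff (jj g1.natDegree he1E)) (hCmap.trans hC)
        simp only [coeff_map, coeff_C] at hcc
        rw [hcc, if_neg (by have := hjj g1.natDegree he1E; omega)]
      apply hτnum g1.natDegree he1E
      have hval := congrArg σb (hrel g1.natDegree he1E)
      rw [map_mul, map_pow, hσba, hσba, hzero, zero_mul] at hval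
      exact hval.symm
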